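/- Fix an outcome ô ∈ {Reject, Accept}^N. Let D ⊆ C_ô, let F ⊆ ℝ^N be a set with F ∩ C = p_ô + D, and set G = p_ô + R(D). Then ∂G ∩ Y_ô ⊆ ∂F ∩ Y_ô. -/

import Mathlib

open MeasureTheory
open scoped ENNReal

/-- Possible outcomes of a test on a single coin. -/
inductive Outcome : Type
  | Reject : Outcome
  | Accept : Outcome
deriving DecidableEq

/-- The cube `C = [p₀, q₀]^N ⊆ ℝ^N`. -/
def cube (N : ℕ) (p₀ q₀ : ℝ) : Set (EuclideanSpace ℝ (Fin N)) :=
  {x | ∀ i, x i ∈ Set.Icc p₀ q₀}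

/-- The corner `p_ô` of the cube `[p₀, q₀]^N` associated with the outcome vector `ô`:
`(p_ô)ᵢ = p₀` if `ôᵢ = Reject` and `(p_ô)ᵢ = q₀` if `ôᵢ = Accept`. -/
noncomputable def corner {N : ℕ} (p₀ q₀ : ℝ) (o : Fin N → Outcome) :
    EuclideanSpace ℝ (Fin N) :=
  WithLp.toLp 2 (fun i => if o i = Outcome.Accept then q₀ else p₀)

/-- The box `C_ô = ∏ᵢ Jᵢ` with `Jᵢ = [0, ε]` if `ôᵢ = Reject` and `Jᵢ = [−ε, 0]` if
`ôᵢ = Accept`, where `ε = q₀ − p₀`; it satisfies `C = p_ô + C_ô`. -/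
def cornerBox {N : ℕ} (p₀ q₀ : ℝ) (o : Fin N → Outcome) :
    Set (EuclideanSpace ℝ (Fin N)) :=
  {x | ∀ i, if o i = Outcome.Accept then x i ∈ Set.Icc (-(q₀ - p₀)) 0
    else x i ∈ Set.Icc 0 (q₀ - p₀)}

/-- `Y_ô`: a point `p` of `∂C` *agrees* with the outcome `ô` if there is no coordinate `i` with
(`pᵢ = p₀` and `ôᵢ = Accept`) or (`pᵢ = q₀` and `ôᵢ = Reject`). -/
def agreeSet {N : ℕ} (p₀ q₀ : ℝ) (o : Fin N → Outcome) :
    Set (EuclideanSpace ℝ (Fin N)) :=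
  {p | p ∈ frontier (cube N p₀ q₀) ∧
    ∀ i, ¬((p i = p₀ ∧ o i = Outcome.Accept) ∨ (p i = q₀ ∧ o i = Outcome.Reject))}

/-- The real sign `±1` associated to a Boolean. -/
noncomputable def sgn (b : Bool) : ℝ := if b then 1 else -1

/-- The reflection `R(S; σ) = {σ ∗ x : x ∈ S}` of a set `S ⊆ ℝ^N` by a sign vector `σ`,
where `∗` denotes componentwise multiplication. -/
noncomputable def reflectSet {N : ℕ} (σ : Fin N → Bool)
    (S : Set (EuclideanSpace ℝ (Fin N))) : Set (EuclideanSpace ℝ (Fin N)) :=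
  (fun x => (WithLp.toLp 2 (fun i => sgn (σ i) * x i) : EuclideanSpace ℝ (Fin N))) '' S

/-- The union `R(S) = ⋃_σ R(S; σ)` of all `2^N` coordinate reflections of `S`. -/
noncomputable def reflectAll {N : ℕ} (S : Set (EuclideanSpace ℝ (Fin N))) :
    Set (EuclideanSpace ℝ (Fin N)) :=
  ⋃ σ : Fin N → Bool, reflectSet σ S

/-- The translate `v + S` of a set `S ⊆ ℝ^N`. -/
def translateSet {N : ℕ} (v : EuclideanSpace ℝ (Fin N))
    (S : Set (EuclideanSpace ℝ (Fin N))) : Set (EuclideanSpace ℝ (Fin N)) :=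
  (fun x => v + x) '' S

section Aux

/-- The sign (`±1`) of coordinate `i` of the corner box. -/
noncomputable def sgo {N : ℕ} (o : Fin N → Outcome) (i : Fin N) : ℝ :=
  if o i = Outcome.Accept then -1 else 1

lemma sgo_mul_self {N : ℕ} (o : Fin N → Outcome) (i : Fin N) :
    sgo o i * sgo o i = 1 := by
  unfold sgo; split <;> norm_num

lemma abs_sgo {N : ℕ} (o : Fin N → Outcome) (i : Fin N) : |sgo o i| = 1 := by
  unfold sgo; split <;> norm_num

/-- Folding map: `φ(x)ᵢ = sᵢ |xᵢ|` where `sᵢ` is the sign of the corner box. -/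
noncomputable def phi {N : ℕ} (o : Fin N → Outcome) (x : EuclideanSpace ℝ (Fin N)) :
    EuclideanSpace ℝ (Fin N) := WithLp.toLp 2 (fun i => sgo o i * |x i|)

/-- Each coordinate distance is bounded by the Euclidean distance. -/
lemma coord_dist_le {N : ℕ} (x y : EuclideanSpace ℝ (Fin N)) (i : Fin N) :
    dist (x i) (y i) ≤ dist x y := by
  rw [EuclideanSpace.dist_eq]
  have h1 : dist (x i) (y i) ^ 2 ≤ ∑ j, dist (x j) (y j) ^ 2 :=
    Finset.single_le_sum (f := fun j => dist (x j) (y j) ^ 2)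
      (fun j _ => sq_nonneg _) (Finset.mem_univ i)
  calc dist (x i) (y i) = Real.sqrt (dist (x i) (y i) ^ 2) := by
        rw [Real.sqrt_sq dist_nonneg]
    _ ≤ _ := Real.sqrt_le_sqrt h1

/-- `φ` is 1-Lipschitz. -/
lemma phi_dist_le {N : ℕ} (o : Fin N → Outcome) (x y : EuclideanSpace ℝ (Fin N)) :
    dist (phi o x) (phi o y) ≤ dist x y := by
  rw [EuclideanSpace.dist_eq, EuclideanSpace.dist_eq]
  apply Real.sqrt_le_sqrt
  apply Finset.sum_le_sum
  intro i _
  have h : dist (phi o x i) (phi o y i) ≤ dist (x i) (y i) := by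
    simp only [Real.dist_eq, phi, PiLp.toLp_apply]
    rw [← mul_sub, abs_mul, abs_sgo, one_mul]
    exact abs_abs_sub_abs_le_abs_sub _ _
  exact pow_le_pow_left₀ dist_nonneg h 2

/-- `φ` fixes points whose coordinates have the box signs. -/
lemma phi_eq_self {N : ℕ} (o : Fin N → Outcome) (x : EuclideanSpace ℝ (Fin N))
    (h : ∀ i, 0 ≤ sgo o i * x i) : phi o x = x := by
  ext i
  have hi := h i
  show sgo o i * |x i| = x i
  have habs : |x i| = sgo o i * x i := by
    have h2 : |sgo o i * x i| = sgo o i * x i := abs_of_nonneg hi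
    rw [abs_mul, abs_sgo, one_mul] at h2
    rw [h2]
  rw [habs, ← mul_assoc, sgo_mul_self, one_mul]

/-- Members of the corner box have the box signs. -/
lemma cornerBox_signs {N : ℕ} {p₀ q₀ : ℝ} {o : Fin N → Outcome}
    {x : EuclideanSpace ℝ (Fin N)} (hx : x ∈ cornerBox p₀ q₀ o) (i : Fin N) :
    0 ≤ sgo o i * x i := by
  have := hx i
  unfold sgo
  split at this <;> rename_i h <;> simp [h]
  · linarith [this.2]
  · exact this.1

/-- `φ` is invariant under reflections. -/
lemma phi_reflect {N : ℕ} (o : Fin N → Outcome) (σ : Fin N → Bool)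
    (x : EuclideanSpace ℝ (Fin N)) :
    phi o ((WithLp.toLp 2 (fun i => sgn (σ i) * x i) : EuclideanSpace ℝ (Fin N))) = phi o x := by
  ext i
  show sgo o i * |sgn (σ i) * x i| = sgo o i * |x i|
  rw [abs_mul]
  have : |sgn (σ i)| = 1 := by unfold sgn; split <;> norm_num
  rw [this, one_mul]

/-- `φ` maps `R(D)` into `D`. -/
lemma phi_mem_of_mem_reflectAll {N : ℕ} {p₀ q₀ : ℝ} {o : Fin N → Outcome}
    {D : Set (EuclideanSpace ℝ (Fin N))} (hD : D ⊆ cornerBox p₀ q₀ o)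
    {x : EuclideanSpace ℝ (Fin N)} (hx : x ∈ reflectAll D) : phi o x ∈ D := by
  obtain ⟨S, ⟨σ, rfl⟩, hxS⟩ := hx
  obtain ⟨d, hd, rfl⟩ := hxS
  rw [phi_reflect, phi_eq_self o d (cornerBox_signs (hD hd))]
  exact hd

/-- Every point is a reflection of its folding. -/
lemma exists_reflect_phi {N : ℕ} (o : Fin N → Outcome) (x : EuclideanSpace ℝ (Fin N)) :
    ∃ σ : Fin N → Bool, (WithLp.toLp 2 (fun i => sgn (σ i) * phi o x i) : EuclideanSpace ℝ (Fin N)) = x := by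
  refine ⟨fun i => if 0 ≤ x i then decide (¬ o i = Outcome.Accept)
    else decide (o i = Outcome.Accept), ?_⟩
  ext i
  show sgn _ * (sgo o i * |x i|) = x i
  by_cases hx : 0 ≤ x i <;> by_cases ho : o i = Outcome.Accept <;>
    simp [hx, ho, sgn, sgo, abs_of_nonneg, abs_of_neg, le_of_not_ge, lt_of_not_ge]

/-- If the folding of `x` lies in `D`, then `x ∈ R(D)`. -/
lemma mem_reflectAll_of_phi_mem {N : ℕ} (o : Fin N → Outcome)
    {D : Set (EuclideanSpace ℝ (Fin N))} {x : EuclideanSpace ℝ (Fin N)}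
    (h : phi o x ∈ D) : x ∈ reflectAll D := by
  obtain ⟨σ, hσ⟩ := exists_reflect_phi o x
  exact Set.mem_iUnion.2 ⟨σ, ⟨phi o x, h, hσ⟩⟩

end Aux

/-- **Boundary of the reflected set on the agreeing boundary.**
For an outcome `ô`, a subset `D ⊆ C_ô`, a set `F` with `F ∩ C = p_ô + D`, and
`G = p_ô + R(D)`, we have `∂G ∩ Y_ô ⊆ ∂F ∩ Y_ô`. -/
theorem stmt_8 {N : ℕ} (hN : 1 ≤ N) (p₀ q₀ : ℝ) (hpq : p₀ < q₀)
    (o : Fin N → Outcome) (D : Set (EuclideanSpace ℝ (Fin N)))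
    (hD : D ⊆ cornerBox p₀ q₀ o)
    (F : Set (EuclideanSpace ℝ (Fin N)))
    (hF : F ∩ cube N p₀ q₀ = translateSet (corner p₀ q₀ o) D) :
    frontier (translateSet (corner p₀ q₀ o) (reflectAll D)) ∩ agreeSet p₀ q₀ o ⊆
      frontier F ∩ agreeSet p₀ q₀ o := by
  intro y hy
  obtain ⟨hyG, hyY⟩ := hy
  refine ⟨?_, hyY⟩
  set v : EuclideanSpace ℝ (Fin N) := corner p₀ q₀ o with hv
  set ε : ℝ := q₀ - p₀ with hε
  have hε0 : 0 < ε := sub_pos.2 hpq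
  -- y is in the (closed) cube
  have hcube_closed : IsClosed (cube N p₀ q₀) := by
    have : cube N p₀ q₀ = ⋂ i, (fun x : EuclideanSpace ℝ (Fin N) => x i) ⁻¹' Set.Icc p₀ q₀ := by
      ext x; simp [cube]
    rw [this]
    exact isClosed_iInter fun i =>
      IsClosed.preimage (EuclideanSpace.proj i).continuous isClosed_Icc
  have hyC : y ∈ cube N p₀ q₀ :=
    hcube_closed.closure_eq ▸ frontier_subset_closure hyY.1
  set z : EuclideanSpace ℝ (Fin N) := y - v with hz
  have hyz : y = v + z := by rw [hz]; abel
  have hzi : ∀ i, z i = y i - v i := fun i => rfl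
  -- z has the box signs
  have hsz : ∀ i, 0 ≤ sgo o i * z i := by
    intro i
    have hyi := hyC i
    rw [hzi i]
    unfold sgo
    by_cases ho : o i = Outcome.Accept <;> simp [ho, hv, corner]
    · linarith [hyi.2]
    · linarith [hyi.1]
  have hphiz : phi o z = z := phi_eq_self o z hsz
  -- |z i| < ε
  have hzlt : ∀ i, |z i| < ε := by
    intro i
    have hyi := hyC i
    have hag := hyY.2 i
    push_neg at hag
    rw [hzi i]
    show |y i - (if o i = Outcome.Accept then q₀ else p₀)| < ε
    by_cases ho : o i = Outcome.Accept
    · have hne : y i ≠ p₀ := fun h => (hag.1 h) ho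
      have h1 : p₀ < y i := lt_of_le_of_ne hyi.1 (Ne.symm hne)
      rw [if_pos ho, abs_sub_lt_iff]
      exact ⟨by linarith [hyi.2], by linarith⟩
    · have hor : o i = Outcome.Reject := by
        cases h : o i with
        | Reject => rfl
        | Accept => exact absurd h ho
      have hne : y i ≠ q₀ := fun h => (hag.2 h) hor
      have h1 : y i < q₀ := lt_of_le_of_ne hyi.2 hne
      rw [if_neg ho, abs_sub_lt_iff]
      exact ⟨by linarith, by linarith [hyi.1]⟩
  rw [frontier_eq_closure_inter_closure] at hyG ⊢
  obtain ⟨hyGc, hyGcc⟩ := hyG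
  constructor
  · -- y ∈ closure F
    rw [Metric.mem_closure_iff] at hyGc ⊢
    intro η hη
    obtain ⟨g, hg, hdg⟩ := hyGc η hη
    obtain ⟨x, hxR, rfl⟩ := hg
    have hd : phi o x ∈ D := phi_mem_of_mem_reflectAll hD hxR
    refine ⟨v + phi o x, ?_, ?_⟩
    · have : v + phi o x ∈ translateSet v D := ⟨phi o x, hd, rfl⟩
      rw [← hF] at this
      exact this.1
    · calc dist y (v + phi o x) = dist (v + z) (v + phi o x) := by rw [← hyz]
        _ = dist z (phi o x) := dist_add_left v z (phi o x)
        _ = dist (phi o z) (phi o x) := by rw [hphiz]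
        _ ≤ dist z x := phi_dist_le o z x
        _ = dist (v + z) (v + x) := (dist_add_left v z x).symm
        _ = dist y (v + x) := by rw [← hyz]
        _ < η := hdg
  · -- y ∈ closure Fᶜ
    rw [Metric.mem_closure_iff] at hyGcc ⊢
    intro η hη
    -- radius below which folding stays in the box
    have hNe : (Finset.univ : Finset (Fin N)).Nonempty :=
      ⟨⟨0, hN⟩, Finset.mem_univ _⟩
    set r : ℝ := Finset.univ.inf' hNe (fun i => ε - |z i|) with hr
    have hr0 : 0 < r := by
      rw [hr, Finset.lt_inf'_iff]
      intro i _
      linarith [hzlt i]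
    have hη' : 0 < min η r := lt_min hη hr0
    obtain ⟨g, hg, hdg⟩ := hyGcc (min η r) hη'
    set w : EuclideanSpace ℝ (Fin N) := g - v with hw
    have hgw : g = v + w := by rw [hw]; abel
    have hwR : w ∉ reflectAll D := by
      intro hcon
      exact hg ⟨w, hcon, hgw.symm⟩
    have hphiw : phi o w ∉ D := fun h => hwR (mem_reflectAll_of_phi_mem o h)
    have hdzw : dist z w < min η r := by
      calc dist z w = dist (v + z) (v + w) := (dist_add_left v z w).symm
        _ = dist y g := by rw [← hyz, ← hgw]
        _ < min η r := hdg
    have hwlt : ∀ i, |w i| < ε := by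
      intro i
      have h1 : dist (z i) (w i) ≤ dist z w := coord_dist_le z w i
      have h2 : dist z w < ε - |z i| := lt_of_lt_of_le hdzw
        (le_trans (min_le_right _ _) (Finset.inf'_le _ (Finset.mem_univ i)))
      have h3 : |w i| ≤ |z i| + |z i - w i| := by
        calc |w i| = |z i - (z i - w i)| := by ring_nf
          _ ≤ |z i| + |z i - w i| := abs_sub _ _
      rw [Real.dist_eq] at h1
      linarith
    -- v + phi o w is in the cube
    have hbC : v + phi o w ∈ cube N p₀ q₀ := by
      intro i
      have hwi := hwlt i
      have habs : 0 ≤ |w i| := abs_nonneg _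
      show v i + sgo o i * |w i| ∈ Set.Icc p₀ q₀
      by_cases ho : o i = Outcome.Accept <;>
        simp [ho, hv, corner, sgo] <;>
        first
          | (constructor <;> linarith)
          | linarith
    have hbF : v + phi o w ∉ F := by
      intro hcon
      have : v + phi o w ∈ translateSet v D := hF ▸ ⟨hcon, hbC⟩
      obtain ⟨d, hd, hdeq⟩ := this
      have : d = phi o w := by
        have := add_left_cancel hdeq
        exact this
      exact hphiw (this ▸ hd)
    refine ⟨v + phi o w, hbF, ?_⟩
    calc dist y (v + phi o w) = dist (v + z) (v + phi o w) := by rw [← hyz]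
      _ = dist z (phi o w) := dist_add_left v z (phi o w)
      _ = dist (phi o z) (phi o w) := by rw [hphiz]
      _ ≤ dist z w := phi_dist_le o z w
      _ < min η r := hdzw
      _ ≤ η := min_le_left _ _
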